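/- Let z be a random variable with values in a separable Hilbert space H with distribution ν, mean z̄, and finite fourth moment E[‖z‖⁴] < ∞. Given N i.i.d. samples z₁,...,z_N ∼ ν, the sample mean ẑ = (1/N) ∑_{k=1}^N z_k satisfies E[‖ẑ − z̄‖⁴_H] ≤ (E[‖z − z̄‖⁴_H] + 3 E[‖z − z̄‖²_H]²) / N². -/

import Mathlib

open MeasureTheory ProbabilityTheory
open scoped RealInnerProductSpace ENNReal

section Aux

variable {H : Type*} [NormedAddCommGroup H] [InnerProductSpace ℝ H] [CompleteSpace H]
  [MeasurableSpace H] [BorelSpace H] [SecondCountableTopology H]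
  {Ω : Type*} [MeasurableSpace Ω] {μ : Measure Ω}

/-- product of two L² real functions is integrable -/
lemma aux_L2_mul {f g : Ω → ℝ} (hf : MemLp f 2 μ) (hg : MemLp g 2 μ) :
    Integrable (fun ω => f ω * g ω) μ := by
  have h : MemLp (f • g) 1 μ := hg.smul hf
  exact memLp_one_iff_integrable.1 h

/-- product of two L⁴ real functions is in L² -/
lemma aux_L4_mul {f g : Ω → ℝ} (hf : MemLp f 4 μ) (hg : MemLp g 4 μ) :
    MemLp (fun ω => f ω * g ω) 2 μ := by
  have h : MemLp (f • g) 2 μ := by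
    refine hg.smul hf (hpqr := ⟨?_⟩)
    rw [show (4:ℝ≥0∞) = 2*2 by norm_num, ENNReal.mul_inv (by simp) (by simp), ← mul_add,
      ENNReal.inv_two_add_inv_two, mul_one]
  exact h

/-- expectation of inner product of independent variables -/
lemma aux_indep_inner {X W : Ω → H} [IsProbabilityMeasure μ] (h : IndepFun X W μ)
    (hXm : AEMeasurable X μ) (hWm : AEMeasurable W μ)
    (hX : Integrable X μ) (hW : Integrable W μ) :
    ∫ ω, ⟪X ω, W ω⟫ ∂μ = ⟪∫ ω, X ω ∂μ, ∫ ω, W ω ∂μ⟫ := by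
  rw [indepFun_iff_map_prod_eq_prod_map_map hXm hWm] at h
  have hinner : Continuous fun p : H × H => ⟪p.1, p.2⟫ := continuous_inner
  have h1 : Integrable (fun x : H => x) (μ.map X) :=
    (integrable_map_measure aestronglyMeasurable_id hXm).mpr hX
  have h2 : Integrable (fun x : H => x) (μ.map W) :=
    (integrable_map_measure aestronglyMeasurable_id hWm).mpr hW
  have hint : Integrable (fun p : H × H => ⟪p.1, p.2⟫) ((μ.map X).prod (μ.map W)) := by
    refine (Integrable.mul_prod (L := ℝ) h1.norm h2.norm).mono
      hinner.aestronglyMeasurable ?_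
    filter_upwards with p
    simpa using abs_real_inner_le_norm p.1 p.2
  calc ∫ ω, ⟪X ω, W ω⟫ ∂μ
      = ∫ p : H × H, ⟪p.1, p.2⟫ ∂(μ.map fun ω => (X ω, W ω)) := by
        rw [integral_map (hXm.prodMk hWm) hinner.aestronglyMeasurable]
    _ = ∫ p : H × H, ⟪p.1, p.2⟫ ∂((μ.map X).prod (μ.map W)) := by rw [h]
    _ = ∫ x, ∫ y, ⟪x, y⟫ ∂(μ.map W) ∂(μ.map X) := integral_prod _ hint
    _ = ∫ x, ⟪x, ∫ y, (y : H) ∂(μ.map W)⟫ ∂(μ.map X) := by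
        congr 1; ext x; exact integral_inner h2 x
    _ = ⟪∫ x, (x : H) ∂(μ.map X), ∫ y, (y : H) ∂(μ.map W)⟫ := by
        rw [show (⟪∫ x, (x : H) ∂(μ.map X), ∫ y, (y : H) ∂(μ.map W)⟫ : ℝ)
            = ⟪∫ y, (y : H) ∂(μ.map W), ∫ x, (x : H) ∂(μ.map X)⟫ from real_inner_comm _ _,
          ← integral_inner h1]
        exact integral_congr_ae (Filter.Eventually.of_forall fun x => real_inner_comm _ _)
    _ = ⟪∫ ω, X ω ∂μ, ∫ ω, W ω ∂μ⟫ := by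
        have eX : ∫ x, (x : H) ∂(μ.map X) = ∫ ω, X ω ∂μ :=
          integral_map hXm aestronglyMeasurable_id
        have eW : ∫ y, (y : H) ∂(μ.map W) = ∫ ω, W ω ∂μ :=
          integral_map hWm aestronglyMeasurable_id
        rw [eX, eW]

end Aux

/-- **Fourth-moment Monte Carlo bound.**
Let `ν` be a probability distribution on a separable Hilbert space `H` with mean
`zbar = ∫ x ∂ν` and finite fourth moment.  If `z 0, ..., z (N-1)` are independent random
variables on a probability space `(Ω, μ)`, each with law `ν`, then the sample mean
`ẑ = N⁻¹ ∑ z k` satisfies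
`E ‖ẑ - zbar‖⁴ ≤ (∫ ‖x - zbar‖⁴ ∂ν + 3 (∫ ‖x - zbar‖² ∂ν)²) / N²`. -/
theorem stmt_7 {H : Type*} [NormedAddCommGroup H] [InnerProductSpace ℝ H] [CompleteSpace H]
    [MeasurableSpace H] [BorelSpace H] [SecondCountableTopology H]
    {Ω : Type*} [MeasurableSpace Ω] (μ : Measure Ω) [IsProbabilityMeasure μ]
    (ν : Measure H) [IsProbabilityMeasure ν]
    (N : ℕ) (hN : 0 < N)
    (z : Fin N → Ω → H)
    (hmeas : ∀ k, Measurable (z k))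
    (hindep : ProbabilityTheory.iIndepFun z μ)
    (hid : ∀ k, Measure.map (z k) μ = ν)
    (hmom : MemLp (id : H → H) 4 ν)
    (zbar : H) (hzbar : zbar = ∫ x, x ∂ν) :
    ∫ ω, ‖(N : ℝ)⁻¹ • (∑ k, z k ω) - zbar‖ ^ 4 ∂μ
      ≤ ((∫ x, ‖x - zbar‖ ^ 4 ∂ν) + 3 * (∫ x, ‖x - zbar‖ ^ 2 ∂ν) ^ 2) / N ^ 2 := by
  classical
  have hN0 : (N : ℝ) ≠ 0 := Nat.cast_ne_zero.2 hN.ne'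
  set Y : Fin N → Ω → H := fun k ω => z k ω - zbar with hY
  set M4 : ℝ := ∫ x, ‖x - zbar‖ ^ 4 ∂ν with hM4def
  set M2 : ℝ := ∫ x, ‖x - zbar‖ ^ 2 ∂ν with hM2def
  have hYmeas : ∀ k, Measurable (Y k) := fun k => (hmeas k).sub measurable_const
  have hz4 : ∀ k, MemLp (z k) 4 μ := by
    intro k
    have h := hmom
    rw [← hid k] at h
    exact (memLp_map_measure_iff aestronglyMeasurable_id (hmeas k).aemeasurable).1 h
  have hY4 : ∀ k, MemLp (Y k) 4 μ := fun k => (hz4 k).sub (memLp_const zbar)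
  have hn4 : ∀ k, MemLp (fun ω => ‖Y k ω‖) 4 μ := fun k => (hY4 k).norm
  -- inner products are in L²
  have hT2 : ∀ i j, MemLp (fun ω => ⟪Y i ω, Y j ω⟫) 2 μ := by
    intro i j
    refine MemLp.of_le (aux_L4_mul (hn4 i) (hn4 j))
      ((hYmeas i).inner (hYmeas j)).aestronglyMeasurable ?_
    filter_upwards with ω
    simp only [Real.norm_eq_abs, abs_mul, abs_norm]
    exact abs_real_inner_le_norm _ _
  have hTint : ∀ i j k l, Integrable (fun ω => ⟪Y i ω, Y j ω⟫ * ⟪Y k ω, Y l ω⟫) μ :=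
    fun i j k l => aux_L2_mul (hT2 i j) (hT2 k l)
  have hnsq : ∀ k, MemLp (fun ω => ‖Y k ω‖ ^ 2) 2 μ := by
    intro k
    have := aux_L4_mul (hn4 k) (hn4 k)
    simpa [pow_two] using this
  have hint22 : ∀ i k, Integrable (fun ω => ‖Y i ω‖ ^ 2 * ‖Y k ω‖ ^ 2) μ :=
    fun i k => aux_L2_mul (hnsq i) (hnsq k)
  have hYint : ∀ k, Integrable (Y k) μ := fun k => (hY4 k).integrable (by norm_num)
  -- mean zero
  have hYmean : ∀ k, ∫ ω, Y k ω ∂μ = 0 := by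
    intro k
    have hzi : Integrable (z k) μ := (hz4 k).integrable (by norm_num)
    have hmap : ∫ ω, z k ω ∂μ = zbar := by
      have : ∫ x, (x : H) ∂(μ.map (z k)) = ∫ ω, z k ω ∂μ :=
        integral_map (hmeas k).aemeasurable aestronglyMeasurable_id
      rw [hzbar, ← hid k, this]
    simp only [hY]
    rw [integral_sub hzi (integrable_const zbar), hmap, integral_const]
    simp
  -- moments
  have hM4mom : ∀ k, ∫ ω, ‖Y k ω‖ ^ 4 ∂μ = M4 := by
    intro k
    rw [hM4def, ← hid k,
      integral_map (f := fun x : H => ‖x - zbar‖ ^ 4) (hmeas k).aemeasurable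
        ((measurable_id'.sub measurable_const).norm.pow_const 4).aestronglyMeasurable]
  have hM2mom : ∀ k, ∫ ω, ‖Y k ω‖ ^ 2 ∂μ = M2 := by
    intro k
    rw [hM2def, ← hid k,
      integral_map (f := fun x : H => ‖x - zbar‖ ^ 2) (hmeas k).aemeasurable
        ((measurable_id'.sub measurable_const).norm.pow_const 2).aestronglyMeasurable]
  have hM2nonneg : 0 ≤ M2 := by
    rw [hM2def]; exact integral_nonneg fun x => by positivity
  have hM4nonneg : 0 ≤ M4 := by
    rw [hM4def]; exact integral_nonneg fun x => by positivity
  -- pairwise independent product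
  have hpair : ∀ i k : Fin N, i ≠ k →
      ∫ ω, ‖Y i ω‖ ^ 2 * ‖Y k ω‖ ^ 2 ∂μ = M2 * M2 := by
    intro i k hik
    have hind : ProbabilityTheory.IndepFun (fun ω => ‖Y i ω‖ ^ 2) (fun ω => ‖Y k ω‖ ^ 2) μ :=
      (hindep.indepFun hik).comp
        ((measurable_id.sub measurable_const).norm.pow_const 2)
        ((measurable_id.sub measurable_const).norm.pow_const 2)
    have h := hind.integral_fun_mul_eq_mul_integral
      ((hnsq i).integrable one_le_two).1 ((hnsq k).integrable one_le_two).1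
    rw [hM2mom i, hM2mom k] at h
    exact h
  -- Cauchy-Schwarz bound
  have hcs : ∀ i j : Fin N, i ≠ j →
      ∫ ω, ⟪Y i ω, Y j ω⟫ * ⟪Y i ω, Y j ω⟫ ∂μ ≤ M2 * M2 := by
    intro i j hij
    calc ∫ ω, ⟪Y i ω, Y j ω⟫ * ⟪Y i ω, Y j ω⟫ ∂μ
        ≤ ∫ ω, ‖Y i ω‖ ^ 2 * ‖Y j ω‖ ^ 2 ∂μ := by
          refine integral_mono (hTint i j i j) (hint22 i j) fun ω => ?_
          have := real_inner_mul_inner_self_le (Y i ω) (Y j ω)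
          simpa [real_inner_self_eq_norm_sq] using this
      _ = M2 * M2 := hpair i j hij
  -- vanishing of terms with a lone index
  have hzero : ∀ a b c d : Fin N, a ≠ b → a ≠ c → a ≠ d →
      ∫ ω, ⟪Y a ω, Y b ω⟫ * ⟪Y c ω, Y d ω⟫ ∂μ = 0 := by
    intro a b c d hab hac had
    set W : Ω → H := fun ω => ⟪Y c ω, Y d ω⟫ • Y b ω with hW
    have hWmeas : Measurable W := ((hYmeas c).inner (hYmeas d)).smul (hYmeas b)
    have hWint : Integrable W μ := by
      have : MemLp W 1 μ :=
        MemLp.smul ((hY4 b).mono_exponent (show (2:ℝ≥0∞) ≤ 4 by norm_num)) (hT2 c d)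
      exact memLp_one_iff_integrable.1 this
    have hindYW : ProbabilityTheory.IndepFun (Y a) W μ := by
      have hmemb : b ∈ ({b, c, d} : Finset (Fin N)) := by simp
      have hmemc : c ∈ ({b, c, d} : Finset (Fin N)) := by simp
      have hmemd : d ∈ ({b, c, d} : Finset (Fin N)) := by simp
      have hdisj : Disjoint ({a} : Finset (Fin N)) ({b, c, d} : Finset (Fin N)) := by
        simp [Finset.disjoint_left, hab, hac, had]
      have base := hindep.indepFun_finset {a} {b, c, d} hdisj hmeas
      have hφ : Measurable fun v : (i : ({a} : Finset (Fin N))) → H =>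
          v ⟨a, Finset.mem_singleton_self a⟩ - zbar :=
        (measurable_pi_apply _).sub measurable_const
      have hψ : Measurable fun v : (i : ({b, c, d} : Finset (Fin N))) → H =>
          (⟪v ⟨c, hmemc⟩ - zbar, v ⟨d, hmemd⟩ - zbar⟫ : ℝ) • (v ⟨b, hmemb⟩ - zbar) := by
        refine Measurable.smul ?_ ?_
        · exact ((measurable_pi_apply _).sub measurable_const).inner
            ((measurable_pi_apply _).sub measurable_const)
        · exact (measurable_pi_apply _).sub measurable_const
      exact base.comp hφ hψ
    have heq : (fun ω => ⟪Y a ω, Y b ω⟫ * ⟪Y c ω, Y d ω⟫) = fun ω => ⟪Y a ω, W ω⟫ := by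
      funext ω
      rw [hW, real_inner_smul_right]
      ring
    rw [heq, aux_indep_inner hindYW (hYmeas a).aemeasurable hWmeas.aemeasurable
      (hYint a) hWint, hYmean a]
    simp
  -- expansion of the fourth power
  have hexp : ∀ ω : Ω, ‖∑ k, Y k ω‖ ^ 4
      = ∑ i : Fin N, ∑ k : Fin N, ∑ j : Fin N, ∑ l : Fin N,
        (⟪Y i ω, Y j ω⟫ * ⟪Y k ω, Y l ω⟫) := by
    intro ω
    have h0 : ‖∑ k, Y k ω‖ ^ 4 = (⟪∑ i, Y i ω, ∑ j, Y j ω⟫ : ℝ) ^ 2 := by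
      rw [real_inner_self_eq_norm_sq, ← pow_mul]
    rw [h0, sum_inner]
    simp_rw [inner_sum]
    rw [sq, Finset.sum_mul_sum]
    exact Finset.sum_congr rfl fun i _ => Finset.sum_congr rfl fun k _ => by
      rw [Finset.sum_mul_sum]
  have hsum : ∫ ω, ‖∑ k, Y k ω‖ ^ 4 ∂μ
      = ∑ i : Fin N, ∑ k : Fin N, ∑ j : Fin N, ∑ l : Fin N,
        ∫ ω, ⟪Y i ω, Y j ω⟫ * ⟪Y k ω, Y l ω⟫ ∂μ := by
    simp_rw [hexp]
    rw [integral_finset_sum _ fun i _ => integrable_finset_sum _ fun k _ =>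
      integrable_finset_sum _ fun j _ => integrable_finset_sum _ fun l _ => hTint i j k l]
    refine Finset.sum_congr rfl fun i _ => ?_
    rw [integral_finset_sum _ fun k _ => integrable_finset_sum _ fun j _ =>
      integrable_finset_sum _ fun l _ => hTint i j k l]
    refine Finset.sum_congr rfl fun k _ => ?_
    rw [integral_finset_sum _ fun j _ => integrable_finset_sum _ fun l _ => hTint i j k l]
    refine Finset.sum_congr rfl fun j _ => ?_
    exact integral_finset_sum _ fun l _ => hTint i j k l
  -- key bound on individual terms
  have hkey : ∀ i k j l : Fin N, ∫ ω, ⟪Y i ω, Y j ω⟫ * ⟪Y k ω, Y l ω⟫ ∂μ ≤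
      (if i = j ∧ j = k ∧ k = l then M4 else 0) + ((if i = j ∧ k = l then M2 * M2 else 0)
        + ((if i = k ∧ j = l then M2 * M2 else 0) + (if i = l ∧ j = k then M2 * M2 else 0))) := by
    intro i k j l
    by_cases h1 : i = j ∧ j = k ∧ k = l
    · obtain ⟨rfl, rfl, rfl⟩ := h1
      have hval : ∫ ω, ⟪Y i ω, Y i ω⟫ * ⟪Y i ω, Y i ω⟫ ∂μ = M4 := by
        rw [← hM4mom i]
        refine integral_congr_ae (Filter.Eventually.of_forall fun ω => ?_)
        show ⟪Y i ω, Y i ω⟫ * ⟪Y i ω, Y i ω⟫ = ‖Y i ω‖ ^ 4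
        rw [real_inner_self_eq_norm_sq]
        ring
      rw [hval, if_pos (show i = i ∧ i = i ∧ i = i from ⟨rfl, rfl, rfl⟩),
        if_pos (show i = i ∧ i = i from ⟨rfl, rfl⟩)]
      nlinarith [mul_self_nonneg M2]
    · by_cases h2 : i = j ∧ k = l
      · obtain ⟨rfl, rfl⟩ := h2
        have hik : i ≠ k := fun h => h1 ⟨rfl, h, rfl⟩
        have hval : ∫ ω, ⟪Y i ω, Y i ω⟫ * ⟪Y k ω, Y k ω⟫ ∂μ = M2 * M2 := by
          rw [← hpair i k hik]
          refine integral_congr_ae (Filter.Eventually.of_forall fun ω => ?_)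
          show ⟪Y i ω, Y i ω⟫ * ⟪Y k ω, Y k ω⟫ = ‖Y i ω‖ ^ 2 * ‖Y k ω‖ ^ 2
          rw [real_inner_self_eq_norm_sq, real_inner_self_eq_norm_sq]
        rw [hval, if_neg h1, if_pos (show i = i ∧ k = k from ⟨rfl, rfl⟩),
          if_neg (show ¬(i = k ∧ i = k) from fun h => hik h.1)]
        linarith
      · by_cases h3 : i = k ∧ j = l
        · obtain ⟨rfl, rfl⟩ := h3
          have hij : i ≠ j := fun h => h2 ⟨h, h⟩
          rw [if_neg h1, if_neg h2, if_pos (show i = i ∧ j = j from ⟨rfl, rfl⟩),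
            if_neg (show ¬(i = j ∧ j = i) from fun h => hij h.1)]
          have := hcs i j hij
          linarith
        · by_cases h4 : i = l ∧ j = k
          · obtain ⟨rfl, rfl⟩ := h4
            have hij : i ≠ j := fun h => h2 ⟨h, h.symm⟩
            have he : ∫ ω, ⟪Y i ω, Y j ω⟫ * ⟪Y j ω, Y i ω⟫ ∂μ
                = ∫ ω, ⟪Y i ω, Y j ω⟫ * ⟪Y i ω, Y j ω⟫ ∂μ :=
              integral_congr_ae (Filter.Eventually.of_forall fun ω => by
                show ⟪Y i ω, Y j ω⟫ * ⟪Y j ω, Y i ω⟫ = ⟪Y i ω, Y j ω⟫ * ⟪Y i ω, Y j ω⟫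
                rw [real_inner_comm (Y j ω) (Y i ω)])
            rw [if_neg h1, if_neg h2,
              if_pos (show i = i ∧ j = j from ⟨rfl, rfl⟩), he]
            have := hcs i j hij
            linarith
          · rw [if_neg h1, if_neg h2, if_neg h3, if_neg h4]
            have hlone : (i ≠ j ∧ i ≠ k ∧ i ≠ l) ∨ (j ≠ i ∧ j ≠ k ∧ j ≠ l)
                ∨ (k ≠ i ∧ k ≠ j ∧ k ≠ l) ∨ (l ≠ i ∧ l ≠ j ∧ l ≠ k) := by
              simp only [Ne, Fin.ext_iff] at h1 h2 h3 h4 ⊢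
              omega
            have hz : ∫ ω, ⟪Y i ω, Y j ω⟫ * ⟪Y k ω, Y l ω⟫ ∂μ = 0 := by
              rcases hlone with ⟨hij, hik, hil⟩ | ⟨hji, hjk, hjl⟩ | ⟨hki, hkj, hkl⟩
                | ⟨hli, hlj, hlk⟩
              · exact hzero i j k l hij hik hil
              · have he : ∫ ω, ⟪Y i ω, Y j ω⟫ * ⟪Y k ω, Y l ω⟫ ∂μ
                    = ∫ ω, ⟪Y j ω, Y i ω⟫ * ⟪Y k ω, Y l ω⟫ ∂μ :=
                  integral_congr_ae (Filter.Eventually.of_forall fun ω => by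
                    show ⟪Y i ω, Y j ω⟫ * ⟪Y k ω, Y l ω⟫ = ⟪Y j ω, Y i ω⟫ * ⟪Y k ω, Y l ω⟫
                    rw [real_inner_comm (Y i ω) (Y j ω)])
                rw [he]
                exact hzero j i k l hji hjk hjl
              · have he : ∫ ω, ⟪Y i ω, Y j ω⟫ * ⟪Y k ω, Y l ω⟫ ∂μ
                    = ∫ ω, ⟪Y k ω, Y l ω⟫ * ⟪Y i ω, Y j ω⟫ ∂μ :=
                  integral_congr_ae (Filter.Eventually.of_forall fun ω => mul_comm _ _)
                rw [he]
                exact hzero k l i j hkl hki hkj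
              · have he : ∫ ω, ⟪Y i ω, Y j ω⟫ * ⟪Y k ω, Y l ω⟫ ∂μ
                    = ∫ ω, ⟪Y l ω, Y k ω⟫ * ⟪Y i ω, Y j ω⟫ ∂μ :=
                  integral_congr_ae (Filter.Eventually.of_forall fun ω => by
                    show ⟪Y i ω, Y j ω⟫ * ⟪Y k ω, Y l ω⟫ = ⟪Y l ω, Y k ω⟫ * ⟪Y i ω, Y j ω⟫
                    rw [real_inner_comm (Y k ω) (Y l ω), mul_comm])
                rw [he]
                exact hzero l k i j hlk hli hlj
            rw [hz]
            norm_num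
  -- counting
  have hcount : (∑ i : Fin N, ∑ k : Fin N, ∑ j : Fin N, ∑ l : Fin N,
      ((if i = j ∧ j = k ∧ k = l then M4 else 0) + ((if i = j ∧ k = l then M2 * M2 else 0)
        + ((if i = k ∧ j = l then M2 * M2 else 0) + (if i = l ∧ j = k then M2 * M2 else 0)))))
      = N * M4 + 3 * ((N:ℝ)^2 * (M2 * M2)) := by
    simp only [Finset.sum_add_distrib]
    have c1 : (∑ i : Fin N, ∑ k : Fin N, ∑ j : Fin N, ∑ l : Fin N,
        (if i = j ∧ j = k ∧ k = l then M4 else 0)) = N * M4 := by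
      simp [ite_and, Finset.sum_ite_eq, Finset.sum_ite_eq', Finset.sum_const, Finset.card_univ]
    have c2 : (∑ i : Fin N, ∑ k : Fin N, ∑ j : Fin N, ∑ l : Fin N,
        (if i = j ∧ k = l then M2 * M2 else 0)) = (N:ℝ)^2 * (M2 * M2) := by
      simp [ite_and, Finset.sum_ite_eq, Finset.sum_ite_eq', Finset.sum_const, Finset.card_univ]
      ring
    have c3 : (∑ i : Fin N, ∑ k : Fin N, ∑ j : Fin N, ∑ l : Fin N,
        (if i = k ∧ j = l then M2 * M2 else 0)) = (N:ℝ)^2 * (M2 * M2) := by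
      simp [ite_and, Finset.sum_ite_eq, Finset.sum_ite_eq', Finset.sum_const, Finset.card_univ]
      ring
    have c4 : (∑ i : Fin N, ∑ k : Fin N, ∑ j : Fin N, ∑ l : Fin N,
        (if i = l ∧ j = k then M2 * M2 else 0)) = (N:ℝ)^2 * (M2 * M2) := by
      simp [ite_and, Finset.sum_ite_eq, Finset.sum_ite_eq', Finset.sum_const, Finset.card_univ]
      ring
    rw [c1, c2, c3, c4]
    ring
  -- pointwise rewriting of the LHS integrand
  have hptw : ∀ ω : Ω, ‖(N : ℝ)⁻¹ • (∑ k, z k ω) - zbar‖ ^ 4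
      = ((N:ℝ)⁻¹) ^ 4 * ‖∑ k, Y k ω‖ ^ 4 := by
    intro ω
    have hsub : (N : ℝ)⁻¹ • (∑ k, z k ω) - zbar = (N : ℝ)⁻¹ • (∑ k, Y k ω) := by
      simp only [hY, Finset.sum_sub_distrib, smul_sub, Finset.sum_const, Finset.card_univ,
        Fintype.card_fin]
      rw [← Nat.cast_smul_eq_nsmul ℝ, smul_smul, inv_mul_cancel₀ hN0, one_smul]
    rw [hsub, norm_smul, mul_pow, Real.norm_eq_abs, abs_of_nonneg (by positivity)]
  calc ∫ ω, ‖(N : ℝ)⁻¹ • (∑ k, z k ω) - zbar‖ ^ 4 ∂μ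
      = ((N:ℝ)⁻¹) ^ 4 * ∫ ω, ‖∑ k, Y k ω‖ ^ 4 ∂μ := by
        simp_rw [hptw]
        exact integral_const_mul _ _
    _ ≤ ((N:ℝ)⁻¹) ^ 4 * ((N:ℝ)^2 * (M4 + 3 * (M2 * M2))) := by
        refine mul_le_mul_of_nonneg_left ?_ (by positivity)
        rw [hsum]
        have hb : (∑ i : Fin N, ∑ k : Fin N, ∑ j : Fin N, ∑ l : Fin N,
            ∫ ω, ⟪Y i ω, Y j ω⟫ * ⟪Y k ω, Y l ω⟫ ∂μ)
            ≤ N * M4 + 3 * ((N:ℝ)^2 * (M2 * M2)) := by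
          rw [← hcount]
          exact Finset.sum_le_sum fun i _ => Finset.sum_le_sum fun k _ =>
            Finset.sum_le_sum fun j _ => Finset.sum_le_sum fun l _ => hkey i k j l
        have hN1 : (1:ℝ) ≤ (N:ℝ) := by exact_mod_cast hN
        have h1' : (0:ℝ) ≤ ((N:ℝ)^2 - N) * M4 := mul_nonneg (by nlinarith) hM4nonneg
        nlinarith [hb, h1']
    _ = (M4 + 3 * M2 ^ 2) / (N:ℝ) ^ 2 := by
        field_simp
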